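/- For each t > 0 let m*(t) denote the unique solution in (0,1) of the equation m = tanh((1+t)·m). Then lim_{t→0⁺} m*(t)/√(3t) = 1; that is, the spontaneous magnetization of the Curie–Weiss model vanishes at the critical point with the classical critical exponent 1/2. -/

import Mathlib

open Real Filter

noncomputable def atnh (x : ℝ) : ℝ := (Real.log (1 + x) - Real.log (1 - x)) / 2

lemma atnh_tanh (y : ℝ) : atnh (Real.tanh y) = y := by
  have ha : 0 < Real.exp y := Real.exp_pos y
  have hb : 0 < Real.exp (-y) := Real.exp_pos (-y)
  have hs : 0 < Real.exp y + Real.exp (-y) := by linarith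
  have h1 : (1 : ℝ) + Real.tanh y = 2 * Real.exp y / (Real.exp y + Real.exp (-y)) := by
    rw [Real.tanh_eq_sinh_div_cosh, Real.sinh_eq, Real.cosh_eq]
    field_simp
    ring
  have h2 : (1 : ℝ) - Real.tanh y = 2 * Real.exp (-y) / (Real.exp y + Real.exp (-y)) := by
    rw [Real.tanh_eq_sinh_div_cosh, Real.sinh_eq, Real.cosh_eq]
    field_simp
    ring
  have h1p : (0:ℝ) < 2 * Real.exp y / (Real.exp y + Real.exp (-y)) := by positivity
  have h2p : (0:ℝ) < 2 * Real.exp (-y) / (Real.exp y + Real.exp (-y)) := by positivity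
  rw [atnh, h1, h2, ← Real.log_div (ne_of_gt h1p) (ne_of_gt h2p)]
  have : 2 * Real.exp y / (Real.exp y + Real.exp (-y)) /
      (2 * Real.exp (-y) / (Real.exp y + Real.exp (-y))) = Real.exp (2 * y) := by
    have key : Real.exp (-y) * Real.exp (2 * y) = Real.exp y := by
      rw [← Real.exp_add]; ring_nf
    field_simp
    nlinarith [key, hs.ne', ha, hb]
  rw [this, Real.log_exp]
  ring

lemma hasDerivAt_atnh {x : ℝ} (hx : x ∈ Set.Ioo (-1 : ℝ) 1) :
    HasDerivAt atnh (1 / (1 - x ^ 2)) x := by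
  obtain ⟨hx1, hx2⟩ := hx
  have h1 : HasDerivAt (fun y : ℝ => Real.log (1 + y)) (1 / (1 + x)) x := by
    have := ((hasDerivAt_id x).const_add 1).log (by intro h; simp at h; linarith)
    simpa using this
  have h2 : HasDerivAt (fun y : ℝ => Real.log (1 - y)) (-1 / (1 - x)) x := by
    have := ((hasDerivAt_id x).const_sub 1).log (by intro h; simp at h; linarith)
    simpa [div_eq_div_iff, neg_div] using this
  have := (h1.sub h2).div_const 2
  refine this.congr_deriv ?_
  have hne1 : (1:ℝ) + x ≠ 0 := by linarith
  have hne2 : (1:ℝ) - x ≠ 0 := by linarith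
  have hne3 : (1:ℝ) - x ^ 2 ≠ 0 := by
    intro h; have : (1 - x) * (1 + x) = 0 := by ring_nf; linarith [h]
    rcases mul_eq_zero.1 this with h | h <;> [exact hne2 h; exact hne1 h]
  field_simp
  ring

lemma atnh_zero : atnh 0 = 0 := by simp [atnh]

lemma atnh_lower {x : ℝ} (hx : x ∈ Set.Ico (0 : ℝ) 1) : x + x ^ 3 / 3 ≤ atnh x := by
  set F : ℝ → ℝ := fun y => atnh y - (y + y ^ 3 / 3) with hF
  have hder : ∀ y ∈ Set.Ioo (-1 : ℝ) 1,
      HasDerivAt F (1 / (1 - y ^ 2) - (1 + 3 * y ^ 2 / 3)) y := by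
    intro y hy
    exact (hasDerivAt_atnh hy).sub
      ((hasDerivAt_id y).add ((hasDerivAt_pow 3 y).div_const 3))
  have hmono : MonotoneOn F (Set.Ico (0 : ℝ) 1) := by
    apply monotoneOn_of_deriv_nonneg (convex_Ico 0 1)
    · intro y hy
      exact (hder y ⟨by linarith [hy.1], hy.2⟩).continuousAt.continuousWithinAt
    · rw [interior_Ico]
      intro y hy
      exact (hder y ⟨by linarith [hy.1], hy.2⟩).differentiableAt.differentiableWithinAt
    · rw [interior_Ico]
      intro y hy
      rw [(hder y ⟨by linarith [hy.1], hy.2⟩).deriv]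
      have h1 : (0:ℝ) < 1 - y ^ 2 := by nlinarith [hy.1, hy.2]
      have : (1:ℝ) + 3 * y ^ 2 / 3 ≤ 1 / (1 - y ^ 2) := by
        rw [le_div_iff₀ h1]; nlinarith [sq_nonneg (y^2)]
      linarith
  have h0 : F 0 ≤ F x := hmono ⟨le_refl 0, one_pos⟩ hx hx.1
  have : F 0 = 0 := by simp [hF, atnh_zero]
  rw [this] at h0
  simpa [hF] using h0

lemma atnh_limit :
    Tendsto (fun x : ℝ => (atnh x - x) / x ^ 3) (nhdsWithin 0 (Set.Ioi 0)) (nhds (1 / 3)) := by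
  have hmem : Set.Ioo (0:ℝ) (1/2) ∈ nhdsWithin (0:ℝ) (Set.Ioi 0) :=
    Ioo_mem_nhdsGT (by norm_num)
  apply HasDerivAt.lhopital_zero_nhdsGT
    (f' := fun x => 1 / (1 - x ^ 2) - 1) (g' := fun x => 3 * x ^ 2)
  · filter_upwards [hmem] with x hx
    exact (hasDerivAt_atnh ⟨by linarith [hx.1], by linarith [hx.2]⟩).sub (hasDerivAt_id x)
  · filter_upwards [hmem] with x hx
    simpa using hasDerivAt_pow 3 x
  · filter_upwards [hmem] with x hx
    have hx0 : (0:ℝ) < x := hx.1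
    positivity
  · have hc : ContinuousAt (fun x : ℝ => atnh x - x) 0 :=
      ((hasDerivAt_atnh (by norm_num : (0:ℝ) ∈ Set.Ioo (-1:ℝ) 1)).sub
        (hasDerivAt_id 0)).continuousAt
    have := hc.tendsto.mono_left (nhdsWithin_le_nhds (s := Set.Ioi (0:ℝ)))
    simpa [atnh_zero] using this
  · have : Tendsto (fun x : ℝ => x ^ 3) (nhds 0) (nhds ((0:ℝ) ^ 3)) :=
      (continuous_pow 3).tendsto 0
    simpa using this.mono_left (nhdsWithin_le_nhds (s := Set.Ioi (0:ℝ)))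
  · have key : Tendsto (fun x : ℝ => 1 / (3 * (1 - x ^ 2)))
        (nhdsWithin 0 (Set.Ioi 0)) (nhds (1 / 3)) := by
      have hc : ContinuousAt (fun x : ℝ => 1 / (3 * (1 - x ^ 2))) 0 := by
        apply ContinuousAt.div continuousAt_const (by fun_prop) (by norm_num)
      have := hc.tendsto.mono_left (nhdsWithin_le_nhds (s := Set.Ioi (0:ℝ)))
      simpa using this
    apply key.congr'
    filter_upwards [hmem] with x hx
    have h1 : (0:ℝ) < 1 - x ^ 2 := by nlinarith [hx.1, hx.2]
    have hx0 : x ≠ 0 := ne_of_gt hx.1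
    field_simp
    ring

theorem curie_weiss_critical_exponent_beta
    (mstar : ℝ → ℝ)
    (hsol : ∀ t : ℝ, 0 < t →
      mstar t ∈ Set.Ioo (0 : ℝ) 1 ∧ mstar t = Real.tanh ((1 + t) * mstar t)) :
    Tendsto (fun t : ℝ => mstar t / Real.sqrt (3 * t))
      (nhdsWithin 0 (Set.Ioi 0)) (nhds 1) := by
  have hkey : ∀ t : ℝ, 0 < t → atnh (mstar t) = (1 + t) * mstar t := by
    intro t ht
    conv_lhs => rw [(hsol t ht).2]
    rw [atnh_tanh]
  have hbound : ∀ t : ℝ, 0 < t → mstar t ≤ Real.sqrt (3 * t) := by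
    intro t ht
    obtain ⟨⟨hm0, hm1⟩, _⟩ := hsol t ht
    have h1 : mstar t + (mstar t) ^ 3 / 3 ≤ atnh (mstar t) :=
      atnh_lower ⟨hm0.le, hm1⟩
    rw [hkey t ht] at h1
    have h2 : (mstar t) ^ 2 ≤ 3 * t := by nlinarith
    have := Real.sqrt_le_sqrt h2
    rwa [Real.sqrt_sq hm0.le] at this
  have hm_tendsto : Tendsto mstar (nhdsWithin 0 (Set.Ioi 0)) (nhdsWithin 0 (Set.Ioi 0)) := by
    rw [tendsto_nhdsWithin_iff]
    constructor
    · have hsq : Tendsto (fun t : ℝ => Real.sqrt (3 * t)) (nhdsWithin 0 (Set.Ioi 0)) (nhds 0) := by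
        have : Tendsto (fun t : ℝ => Real.sqrt (3 * t)) (nhds 0) (nhds (Real.sqrt (3 * 0))) :=
          (Real.continuous_sqrt.comp (continuous_const.mul continuous_id)).tendsto 0
        simpa using this.mono_left (nhdsWithin_le_nhds (s := Set.Ioi (0:ℝ)))
      apply tendsto_of_tendsto_of_tendsto_of_le_of_le' tendsto_const_nhds hsq
      · filter_upwards [self_mem_nhdsWithin] with t ht
        exact ((hsol t ht).1.1).le
      · filter_upwards [self_mem_nhdsWithin] with t ht
        exact hbound t ht
    · filter_upwards [self_mem_nhdsWithin] with t ht
      exact (hsol t ht).1.1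
  have hcomp := atnh_limit.comp hm_tendsto
  have h5 : Tendsto (fun t : ℝ => t / (mstar t) ^ 2)
      (nhdsWithin 0 (Set.Ioi 0)) (nhds (1 / 3)) := by
    apply hcomp.congr'
    filter_upwards [self_mem_nhdsWithin] with t ht
    obtain ⟨⟨hm0, hm1⟩, _⟩ := hsol t ht
    have hnum : atnh (mstar t) - mstar t = t * mstar t := by
      rw [hkey t ht]; ring
    simp only [Function.comp]
    rw [hnum]
    have hm0' : mstar t ≠ 0 := ne_of_gt hm0
    field_simp
  have h6 : Tendsto (fun t : ℝ => 3 * (t / (mstar t) ^ 2))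
      (nhdsWithin 0 (Set.Ioi 0)) (nhds 1) := by
    have h := h5.const_mul (3:ℝ)
    rw [show (3:ℝ) * (1/3) = 1 by norm_num] at h
    exact h
  have h7 := (h6.inv₀ one_ne_zero)
  have h8 : Tendsto (fun t : ℝ => Real.sqrt ((3 * (t / (mstar t) ^ 2))⁻¹))
      (nhdsWithin 0 (Set.Ioi 0)) (nhds 1) := by
    have := (Real.continuous_sqrt.tendsto 1⁻¹).comp h7
    simpa only [Function.comp_def, inv_one, Real.sqrt_one] using this
  apply h8.congr'
  filter_upwards [self_mem_nhdsWithin] with t ht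
  obtain ⟨⟨hm0, hm1⟩, _⟩ := hsol t ht
  have hm0' : mstar t ≠ 0 := ne_of_gt hm0
  have ht' : (t:ℝ) ≠ 0 := ne_of_gt ht
  have : (3 * (t / (mstar t) ^ 2))⁻¹ = (mstar t) ^ 2 / (3 * t) := by
    field_simp
  rw [this, Real.sqrt_div (sq_nonneg (mstar t)), Real.sqrt_sq hm0.le]
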